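/- Let (a_j)_{j≥1} and (b_j)_{j≥1} be sequences of nonnegative random variables such that for each j, the random vector (a_1, …, a_{j-1}, b_j) has the property that b_j, a_1, …, a_{j-1} are mutually independent, all a_j are identically distributed, and all b_j are identically distributed. Suppose that for some p ∈ (0, 1], E[a_1^p] < 1 and E[b_1^p] < ∞. Then E[(∑_{j=1}^∞ b_j · ∏_{k=1}^{j-1} a_k)^p] ≤ E[b_1^p] / (1 − E[a_1^p]); in particular the series ∑_{j=1}^∞ b_j ∏_{k=1}^{j-1} a_k converges almost surely. -/

import Mathlib

open MeasureTheory ProbabilityTheory Finset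
open scoped ENNReal

lemma pmb_sum_rpow_le {p : ℝ} (hp0 : 0 < p) (hp1 : p ≤ 1) {ι : Type*} (s : Finset ι)
    (f : ι → ℝ≥0∞) : (∑ i ∈ s, f i) ^ p ≤ ∑ i ∈ s, f i ^ p := by
  classical
  induction s using Finset.induction with
  | empty => simp [ENNReal.zero_rpow_of_pos hp0]
  | insert _ _ h ih =>
    rw [Finset.sum_insert h, Finset.sum_insert h]
    exact (ENNReal.rpow_add_le_add_rpow _ _ hp0.le hp1).trans (add_le_add_right ih _)

lemma pmb_tsum_rpow_le {p : ℝ} (hp0 : 0 < p) (hp1 : p ≤ 1) (f : ℕ → ℝ≥0∞) :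
    (∑' i, f i) ^ p ≤ ∑' i, f i ^ p := by
  rw [← ENNReal.le_rpow_inv_iff hp0, ENNReal.tsum_eq_iSup_sum]
  refine iSup_le fun s => ?_
  rw [ENNReal.le_rpow_inv_iff hp0]
  exact (pmb_sum_rpow_le hp0 hp1 s f).trans (ENNReal.sum_le_tsum s)

lemma pmb_prod_rpow {p : ℝ} (hp0 : 0 ≤ p) {ι : Type*} (s : Finset ι) (f : ι → ℝ≥0∞) :
    (∏ i ∈ s, f i) ^ p = ∏ i ∈ s, f i ^ p := by
  classical
  induction s using Finset.induction with
  | empty => simp [ENNReal.one_rpow]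
  | insert _ _ h ih =>
    rw [Finset.prod_insert h, Finset.prod_insert h, ENNReal.mul_rpow_of_nonneg _ _ hp0, ih]

lemma pmb_iIndep_castSucc {Ω : Type*} [MeasurableSpace Ω] {μ : Measure Ω} {n : ℕ}
    {F : Fin (n + 1) → Ω → ℝ}
    (h : iIndepFun (m := fun _ => (inferInstance : MeasurableSpace ℝ)) F μ) :
    iIndepFun (m := fun _ => (inferInstance : MeasurableSpace ℝ))
      (fun i : Fin n => F i.castSucc) μ := by
  classical
  rw [iIndepFun_iff_measure_inter_preimage_eq_mul] at h ⊢
  intro S sets hsets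
  set sets' : Fin (n + 1) → Set ℝ :=
    fun i => if h : (i : ℕ) < n then sets ⟨i, h⟩ else Set.univ with hsets'
  have hcast : ∀ i : Fin n, sets' i.castSucc = sets i := by
    intro i
    simp only [hsets', Fin.coe_castSucc, i.isLt, dif_pos]
  have key := h (S.image Fin.castSucc) (sets := sets') ?_
  · rw [Finset.prod_image (fun x _ y _ h => Fin.castSucc_injective n h)] at key
    have h1 : (⋂ i ∈ S.image Fin.castSucc, F i ⁻¹' sets' i)
        = ⋂ i ∈ S, F i.castSucc ⁻¹' sets i := by
      ext ω
      simp only [Set.mem_iInter, Finset.mem_image]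
      constructor
      · intro hh i hi
        have := hh i.castSucc ⟨i, hi, rfl⟩
        rwa [hcast] at this
      · rintro hh j ⟨i, hi, rfl⟩
        rw [hcast]; exact hh i hi
    rw [h1] at key
    simpa only [hcast] using key
  · rintro j hj
    rcases Finset.mem_image.1 hj with ⟨i, hi, rfl⟩
    rw [hcast]
    exact hsets i hi

lemma pmb_lintegral_prod {Ω : Type*} [MeasurableSpace Ω] {μ : Measure Ω}
    [IsProbabilityMeasure μ] (g : ℝ → ℝ≥0∞) (hg : Measurable g) :
    ∀ (n : ℕ) (F : Fin n → Ω → ℝ), (∀ i, Measurable (F i)) →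
      iIndepFun (m := fun _ => (inferInstance : MeasurableSpace ℝ)) F μ →
      ∫⁻ ω, ∏ i, g (F i ω) ∂μ = ∏ i, ∫⁻ ω, g (F i ω) ∂μ := by
  intro n
  induction n with
  | zero => intro F _ _; simp
  | succ n ih =>
    intro F hF hind
    set S : Finset (Fin (n + 1)) := Finset.univ.image Fin.castSucc with hS
    have hlastS : Fin.last n ∉ S := by
      simp only [hS, Finset.mem_image]
      rintro ⟨i, -, hi⟩
      exact absurd (congrArg Fin.val hi) (by simp [Fin.castSucc]; omega)
    have hdisj : Disjoint S {Fin.last n} := by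
      simp [Finset.disjoint_singleton_right, hlastS]
    have hmemT : Fin.last n ∈ ({Fin.last n} : Finset (Fin (n + 1))) := Finset.mem_singleton_self _
    have hbase := hind.indepFun_finset S {Fin.last n} hdisj hF
    have hφ : Measurable fun v : (i : S) → ℝ => ∏ i : S, g (v i) :=
      Finset.measurable_prod _ fun i _ => hg.comp (measurable_pi_apply i)
    have hψ : Measurable fun v : (i : ({Fin.last n} : Finset (Fin (n+1)))) → ℝ =>
        g (v ⟨Fin.last n, hmemT⟩) := hg.comp (measurable_pi_apply _)
    have hIndep : IndepFun (fun ω => ∏ i : Fin n, g (F i.castSucc ω))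
        (fun ω => g (F (Fin.last n) ω)) μ := by
      have hcomp := hbase.comp hφ hψ
      have heq : (fun ω => ∏ i : Fin n, g (F i.castSucc ω))
          = (fun v : (i : S) → ℝ => ∏ i : S, g (v i)) ∘ (fun ω (i : S) => F i ω) := by
        funext ω
        simp only [Function.comp]
        rw [Finset.prod_coe_sort S (fun i => g (F i ω))]
        rw [hS, Finset.prod_image (fun x _ y _ h => Fin.castSucc_injective n h)]
      rw [heq]
      exact hcomp
    have hmeas1 : Measurable fun ω => ∏ i : Fin n, g (F i.castSucc ω) :=
      Finset.measurable_prod _ fun i _ => hg.comp (hF _)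
    have hmeas2 : Measurable fun ω => g (F (Fin.last n) ω) := hg.comp (hF _)
    calc ∫⁻ ω, ∏ i, g (F i ω) ∂μ
        = ∫⁻ ω, (∏ i : Fin n, g (F i.castSucc ω)) * g (F (Fin.last n) ω) ∂μ := by
          simp_rw [Fin.prod_univ_castSucc]
      _ = (∫⁻ ω, ∏ i : Fin n, g (F i.castSucc ω) ∂μ) * ∫⁻ ω, g (F (Fin.last n) ω) ∂μ :=
          lintegral_mul_eq_lintegral_mul_lintegral_of_indepFun'' hmeas1.aemeasurable
            hmeas2.aemeasurable hIndep
      _ = (∏ i : Fin n, ∫⁻ ω, g (F i.castSucc ω) ∂μ) * ∫⁻ ω, g (F (Fin.last n) ω) ∂μ := by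
          rw [ih (fun i => F i.castSucc) (fun i => hF _) (pmb_iIndep_castSucc hind)]
      _ = ∏ i, ∫⁻ ω, g (F i ω) ∂μ := by rw [Fin.prod_univ_castSucc]

/-- Grey-type moment bound: if the `a_j` are i.i.d., the `b_j` are i.i.d., each `b_j`
is jointly independent of `a_0, …, a_{j-1}`, `E[a^p] < 1` and `E[b^p] < ∞` for some
`p ∈ (0,1]`, then `E[(∑_j b_j ∏_{k<j} a_k)^p] ≤ E[b^p]/(1 - E[a^p])` and the series
converges almost surely. -/
theorem perpetuity_moment_bound {Ω : Type*} [MeasurableSpace Ω]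
    (μ : Measure Ω) [IsProbabilityMeasure μ]
    (a b : ℕ → Ω → ℝ)
    (ha_meas : ∀ j, Measurable (a j)) (hb_meas : ∀ j, Measurable (b j))
    (ha_nonneg : ∀ j ω, 0 ≤ a j ω) (hb_nonneg : ∀ j ω, 0 ≤ b j ω)
    (ha_ident : ∀ j, IdentDistrib (a j) (a 0) μ μ)
    (hb_ident : ∀ j, IdentDistrib (b j) (b 0) μ μ)
    (hindep : ∀ j : ℕ, iIndepFun (m := fun _ => (inferInstance : MeasurableSpace ℝ))
      (Fin.snoc (fun i : Fin j => a (i : ℕ)) (b j)) μ)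
    (p : ℝ) (hp0 : 0 < p) (hp1 : p ≤ 1)
    (ha_mom : (∫⁻ ω, ENNReal.ofReal (a 0 ω) ^ p ∂μ) < 1)
    (hb_mom : (∫⁻ ω, ENNReal.ofReal (b 0 ω) ^ p ∂μ) < ⊤) :
    (∫⁻ ω, (∑' j : ℕ, ENNReal.ofReal (b j ω) *
          ∏ k ∈ Finset.range j, ENNReal.ofReal (a k ω)) ^ p ∂μ) ≤
      (∫⁻ ω, ENNReal.ofReal (b 0 ω) ^ p ∂μ) /
        (1 - ∫⁻ ω, ENNReal.ofReal (a 0 ω) ^ p ∂μ) ∧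
    (∀ᵐ ω ∂μ, Summable fun j : ℕ => b j ω * ∏ k ∈ Finset.range j, a k ω) := by
  set g : ℝ → ℝ≥0∞ := fun x => ENNReal.ofReal x ^ p with hg_def
  have hg : Measurable g := ENNReal.measurable_ofReal.pow_const p
  set A : ℝ≥0∞ := ∫⁻ ω, ENNReal.ofReal (a 0 ω) ^ p ∂μ with hA_def
  set B : ℝ≥0∞ := ∫⁻ ω, ENNReal.ofReal (b 0 ω) ^ p ∂μ with hB_def
  set f : ℕ → Ω → ℝ≥0∞ :=
    fun j ω => ENNReal.ofReal (b j ω) * ∏ k ∈ Finset.range j, ENNReal.ofReal (a k ω) with hf_def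
  have hf_meas : ∀ j, Measurable (f j) := fun j =>
    (hb_meas j).ennreal_ofReal.mul
      (Finset.measurable_prod _ fun k _ => (ha_meas k).ennreal_ofReal)
  have hterm : ∀ j, (∫⁻ ω, (f j ω) ^ p ∂μ) = A ^ j * B := by
    intro j
    set F : Fin (j + 1) → Ω → ℝ := Fin.snoc (fun i : Fin j => a (i : ℕ)) (b j) with hF_def
    have hFcast : ∀ i : Fin j, F i.castSucc = a (i : ℕ) := by
      intro i; simp [hF_def, Fin.snoc_castSucc]
    have hFlast : F (Fin.last j) = b j := by simp [hF_def, Fin.snoc_last]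
    have hFmeas : ∀ i, Measurable (F i) := by
      intro i
      refine Fin.lastCases ?_ (fun i => ?_) i
      · rw [hFlast]; exact hb_meas j
      · rw [hFcast]; exact ha_meas i
    have hprod := pmb_lintegral_prod g hg (j + 1) F hFmeas (hindep j)
    have hpt : ∀ ω, (f j ω) ^ p = ∏ i, g (F i ω) := by
      intro ω
      rw [Fin.prod_univ_castSucc]
      have h1 : ∀ i : Fin j, g (F i.castSucc ω) = g (a (i : ℕ) ω) := by
        intro i; rw [hFcast]
      simp only [h1, hFlast]
      rw [hf_def, ENNReal.mul_rpow_of_nonneg _ _ hp0.le, pmb_prod_rpow hp0.le,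
        mul_comm, ← Fin.prod_univ_eq_prod_range (fun k => g (a k ω)) j]
    calc (∫⁻ ω, (f j ω) ^ p ∂μ) = ∫⁻ ω, ∏ i, g (F i ω) ∂μ := lintegral_congr hpt
      _ = ∏ i, ∫⁻ ω, g (F i ω) ∂μ := hprod
      _ = (∏ i : Fin j, ∫⁻ ω, g (F i.castSucc ω) ∂μ) * ∫⁻ ω, g (F (Fin.last j) ω) ∂μ :=
          Fin.prod_univ_castSucc _
      _ = A ^ j * B := by
          have h1 : ∀ i : Fin j, (∫⁻ ω, g (F i.castSucc ω) ∂μ) = A := by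
            intro i
            rw [hFcast]
            exact ((ha_ident i).comp hg).lintegral_eq
          have h2 : (∫⁻ ω, g (F (Fin.last j) ω) ∂μ) = B := by
            rw [hFlast]
            exact ((hb_ident j).comp hg).lintegral_eq
          simp only [h1, h2, Finset.prod_const, Finset.card_univ, Fintype.card_fin]
  have hbound : (∫⁻ ω, (∑' j : ℕ, f j ω) ^ p ∂μ) ≤ B / (1 - A) := by
    calc (∫⁻ ω, (∑' j : ℕ, f j ω) ^ p ∂μ)
        ≤ ∫⁻ ω, ∑' j : ℕ, (f j ω) ^ p ∂μ :=
          lintegral_mono fun ω => pmb_tsum_rpow_le hp0 hp1 _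
      _ = ∑' j : ℕ, ∫⁻ ω, (f j ω) ^ p ∂μ :=
          lintegral_tsum fun j => ((hf_meas j).pow_const p).aemeasurable
      _ = ∑' j : ℕ, A ^ j * B := tsum_congr hterm
      _ = (1 - A)⁻¹ * B := by rw [ENNReal.tsum_mul_right, ENNReal.tsum_geometric]
      _ = B / (1 - A) := by rw [div_eq_mul_inv, mul_comm]
  refine ⟨hbound, ?_⟩
  have hA1 : (1 - A) ≠ 0 := (tsub_pos_iff_lt.mpr ha_mom).ne'
  have hfin : B / (1 - A) < ⊤ := ENNReal.div_lt_top hb_mom.ne hA1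
  have hmeas : Measurable fun ω => (∑' j : ℕ, f j ω) ^ p :=
    (Measurable.ennreal_tsum hf_meas).pow_const p
  have hae : ∀ᵐ ω ∂μ, (∑' j : ℕ, f j ω) ^ p < ⊤ :=
    ae_lt_top hmeas (hbound.trans_lt hfin).ne
  filter_upwards [hae] with ω hω
  have htop : (∑' j : ℕ, f j ω) ≠ ⊤ :=
    ((ENNReal.rpow_lt_top_iff_of_pos hp0).1 hω).ne
  have hof : ∀ j, f j ω = ENNReal.ofReal (b j ω * ∏ k ∈ Finset.range j, a k ω) := by
    intro j
    rw [hf_def, ENNReal.ofReal_mul (hb_nonneg j ω),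
      ENNReal.ofReal_prod_of_nonneg fun k _ => ha_nonneg k ω]
  have htop' : (∑' j : ℕ, ENNReal.ofReal (b j ω * ∏ k ∈ Finset.range j, a k ω)) ≠ ⊤ := by
    rw [← tsum_congr hof]; exact htop
  have hsum := ENNReal.summable_toReal htop'
  refine hsum.congr fun j => ?_
  exact ENNReal.toReal_ofReal
    (mul_nonneg (hb_nonneg j ω) (Finset.prod_nonneg fun k _ => ha_nonneg k ω))
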